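/- Let 𝒳 and 𝒴 be nonempty finite sets, let P_{XY} be a joint probability mass function on 𝒳×𝒴, and let α ∈ (1,∞). Then the maximum over all channels Q from 𝒴 to 𝒳 (i.e., families (Q(·|y))_{y∈𝒴} of probability mass functions on 𝒳) of ∑_{x∈𝒳, y∈𝒴} P_{XY}(x,y)·Q(x|y)^{(α−1)/α} equals ∑_{y∈𝒴} (∑_{x∈𝒳} P_{XY}(x,y)^α)^{1/α}. -/

import Mathlib

open Real BigOperators

/-- A probability mass function on a finite set: nonnegative and sums to 1. -/
def IsPMF {X : Type} [Fintype X] (P : X → ℝ) : Prop :=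
  (∀ x, 0 ≤ P x) ∧ ∑ x, P x = 1

/-- A joint probability mass function on `X × Y`. -/
def IsJointPMF {X Y : Type} [Fintype X] [Fintype Y] (P : X → Y → ℝ) : Prop :=
  (∀ x y, 0 ≤ P x y) ∧ ∑ x, ∑ y, P x y = 1

/-- the maximum over all channels `Q` from `Y` to `X` of
`∑ x y, P x y * Q(x|y)^((α-1)/α)` equals `∑ y, (∑ x, P x y ^ α) ^ (1/α)`. -/
theorem max_tilted_channel_value {X Y : Type} [Fintype X] [Fintype Y]
    [Nonempty X] [Nonempty Y]
    (P : X → Y → ℝ) (hP : IsJointPMF P) (α : ℝ) (hα : 1 < α) :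
    IsGreatest
      {v : ℝ | ∃ Q : Y → X → ℝ, (∀ y, IsPMF (Q y)) ∧
        v = ∑ x, ∑ y, P x y * Q y x ^ ((α - 1) / α)}
      (∑ y, (∑ x, P x y ^ α) ^ (1 / α)) := by
  obtain ⟨hP0, hP1⟩ := hP
  have hα0 : (0:ℝ) < α := lt_trans one_pos hα
  have hα1 : (0:ℝ) < α - 1 := sub_pos.2 hα
  have hβ0 : 0 ≤ (α - 1) / α := le_of_lt (div_pos hα1 hα0)
  set S : Y → ℝ := fun y => ∑ x, P x y ^ α with hS
  have hS0 : ∀ y, 0 ≤ S y := fun y => Finset.sum_nonneg fun x _ => rpow_nonneg (hP0 x y) α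
  have key : ∀ (p : ℝ), 0 ≤ p → p * p ^ (α - 1) = p ^ α := by
    intro p hp
    rcases eq_or_lt_of_le hp with h | h
    · rw [← h, zero_rpow hα1.ne', zero_rpow hα0.ne', mul_zero]
    · nth_rw 1 [← Real.rpow_one p]
      rw [← Real.rpow_add h]
      norm_num
  constructor
  · classical
    refine ⟨fun y x => if S y = 0 then (Fintype.card X : ℝ)⁻¹ else P x y ^ α / S y, ?_, ?_⟩
    · intro y
      by_cases h : S y = 0
      · simp only [h, if_true]
        constructor
        · intro x; positivity
        · rw [Finset.sum_const, Finset.card_univ, nsmul_eq_mul,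
            mul_inv_cancel₀ (Nat.cast_ne_zero.2 Fintype.card_ne_zero)]
      · simp only [h, if_false]
        constructor
        · intro x; exact div_nonneg (rpow_nonneg (hP0 x y) α) (hS0 y)
        · rw [← Finset.sum_div, div_self h]
    · rw [Finset.sum_comm]
      refine Finset.sum_congr rfl fun y _ => ?_
      by_cases h : S y = 0
      · have hz : ∀ x, P x y = 0 := by
          intro x
          have h1 := (Finset.sum_eq_zero_iff_of_nonneg
            (fun x _ => rpow_nonneg (hP0 x y) α)).1 h x (Finset.mem_univ x)
          exact (Real.rpow_eq_zero (hP0 x y) hα0.ne').1 h1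
        rw [show (∑ x, P x y ^ α) = S y from rfl, h, zero_rpow (by positivity : (1:ℝ)/α ≠ 0)]
        symm
        apply Finset.sum_eq_zero
        intro x _
        rw [hz x, zero_mul]
      · have hSpos : 0 < S y := lt_of_le_of_ne (hS0 y) (Ne.symm h)
        simp only [h, if_false]
        have hterm : ∀ x, P x y * (P x y ^ α / S y) ^ ((α - 1) / α)
            = P x y ^ α / S y ^ ((α - 1) / α) := by
          intro x
          rw [Real.div_rpow (rpow_nonneg (hP0 x y) α) (hS0 y),
            ← Real.rpow_mul (hP0 x y),
            show α * ((α - 1) / α) = α - 1 by field_simp,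
            ← mul_div_assoc, key (P x y) (hP0 x y)]
        rw [Finset.sum_congr rfl fun x _ => hterm x, ← Finset.sum_div,
          show (∑ x, P x y ^ α) = S y from rfl,
          show (1:ℝ)/α = 1 - (α - 1)/α by field_simp; ring,
          Real.rpow_sub hSpos, Real.rpow_one]
  · rintro v ⟨Q, hQ, rfl⟩
    rw [Finset.sum_comm]
    apply Finset.sum_le_sum
    intro y _
    have hpq : α.HolderConjugate (α / (α - 1)) := Real.HolderConjugate.conjExponent hα
    calc ∑ x, P x y * Q y x ^ ((α - 1) / α)
        ≤ (∑ x, P x y ^ α) ^ (1 / α) *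
          (∑ x, (Q y x ^ ((α - 1) / α)) ^ (α / (α - 1))) ^ (1 / (α / (α - 1))) := by
          apply Real.inner_le_Lp_mul_Lq_of_nonneg Finset.univ hpq
          · intro x _; exact hP0 x y
          · intro x _; exact rpow_nonneg ((hQ y).1 x) _
      _ = (∑ x, P x y ^ α) ^ (1 / α) := by
          have hq1 : ∀ x, (Q y x ^ ((α - 1) / α)) ^ (α / (α - 1)) = Q y x := by
            intro x
            rw [← Real.rpow_mul ((hQ y).1 x),
              show (α - 1) / α * (α / (α - 1)) = 1 by field_simp,
              Real.rpow_one]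
          rw [Finset.sum_congr rfl fun x _ => hq1 x, (hQ y).2, Real.one_rpow, mul_one]
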